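/- Let Z^ε be a family of discrete-time Markov chains on finite S converging entrywise (in transition probabilities on off-diagonal entries) to a chain Z, let E ⊆ S be nonempty such that from every state of S the set E is reachable under Z, and let τ^ε = min{n : Z^ε_n ∈ E}, τ = min{n : Z_n ∈ E}. Then for each i ∈ S and j ∈ E, P_i(Z^ε_{τ^ε} = j) → P_i(Z_τ = j) as ε ↓ 0. -/

import Mathlib

open Filter Topology Finset

/-- `HittingDistribution P E j h`: `h k = P_k(Z_τ = j)` where `τ` is the first hitting
time of `E` by the chain with transition matrix `P`. The hitting probabilities are
characterized as the minimal nonnegative solution of the standard linear system. -/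
def HittingDistribution {N : ℕ} (P : Matrix (Fin N) (Fin N) ℝ) (E : Finset (Fin N))
    (j : Fin N) (h : Fin N → ℝ) : Prop :=
  (∀ k, 0 ≤ h k) ∧ (∀ k ∈ E, h k = if k = j then 1 else 0) ∧
  (∀ k ∉ E, h k = ∑ m, P k m * h m) ∧
  ∀ g : Fin N → ℝ, (∀ k, 0 ≤ g k) → (∀ k ∈ E, g k = if k = j then 1 else 0) →
    (∀ k ∉ E, g k = ∑ m, P k m * g m) → ∀ k, h k ≤ g k

/-- If discrete-time chains `Z^ε` converge (entrywise on off-diagonal transition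
probabilities) to a chain `Z` from every state of which the nonempty set `E` is
reachable, then the hitting distributions converge: for `i ∈ S` and `j ∈ E`,
`P_i(Z^ε_{τ^ε} = j) → P_i(Z_τ = j)` as `ε ↓ 0`. -/

def subQ {N : ℕ} (P : Matrix (Fin N) (Fin N) ℝ) (E : Finset (Fin N)) :
    Matrix {k : Fin N // k ∉ E} {k : Fin N // k ∉ E} ℝ :=
  fun k m => P k.1 m.1

lemma maxzero {N : ℕ} (P : Matrix (Fin N) (Fin N) ℝ) (hP : ∀ i j, 0 ≤ P i j)
    (E : Finset (Fin N))
    (hreach : ∀ i : Fin N, ∃ e ∈ E, Relation.ReflTransGen (fun x y => 0 < P x y) i e)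
    (y : Fin N → ℝ) (hyE : ∀ k ∈ E, y k = 0)
    (hyF : ∀ k ∉ E, y k = ∑ m, P k m * y m)
    (hrow : ∀ i, ∑ m, P i m = 1) : ∀ k, y k = 0 := by
  intro k
  obtain ⟨k₀, -, hk₀⟩ := Finset.exists_max_image Finset.univ (fun k => |y k|)
    ⟨k, mem_univ k⟩
  set M := |y k₀| with hM
  by_cases hM0 : M = 0
  · have := hk₀ k (mem_univ k)
    rw [hM0] at this
    exact abs_eq_zero.mp (le_antisymm this (abs_nonneg _))
  have hMpos : 0 < M := lt_of_le_of_ne (abs_nonneg _) (Ne.symm hM0)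
  -- step lemma
  have step : ∀ a, |y a| = M → ∀ b, 0 < P a b → |y b| = M := by
    intro a ha b hb
    have haE : a ∉ E := by
      intro haE
      rw [hyE a haE] at ha
      simp at ha
      exact hM0 ha.symm
    have habs : M ≤ ∑ m, P a m * |y m| := by
      calc M = |y a| := ha.symm
        _ = |∑ m, P a m * y m| := by rw [hyF a haE]
        _ ≤ ∑ m, |P a m * y m| := Finset.abs_sum_le_sum_abs _ _
        _ = ∑ m, P a m * |y m| := by
            refine Finset.sum_congr rfl fun m _ => ?_
            rw [abs_mul, abs_of_nonneg (hP a m)]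
    have hsum0 : ∑ m, P a m * (M - |y m|) = 0 := by
      have hle : ∑ m, P a m * (M - |y m|) ≤ 0 := by
        have : ∑ m, P a m * (M - |y m|) = M - ∑ m, P a m * |y m| := by
          simp [mul_sub, Finset.sum_sub_distrib, ← Finset.sum_mul, hrow a]
        linarith
      have hge : 0 ≤ ∑ m, P a m * (M - |y m|) :=
        Finset.sum_nonneg fun m _ => mul_nonneg (hP a m)
          (sub_nonneg.mpr (hk₀ m (mem_univ m)))
      linarith
    have := (Finset.sum_eq_zero_iff_of_nonneg
      (fun m _ => mul_nonneg (hP a m) (sub_nonneg.mpr (hk₀ m (mem_univ m))))).mp hsum0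
        b (mem_univ b)
    rcases mul_eq_zero.mp this with h1 | h2
    · exact absurd h1 (ne_of_gt hb)
    · linarith [sub_eq_zero.mp h2]
  have prop : ∀ z, Relation.ReflTransGen (fun a b => 0 < P a b) k₀ z → |y z| = M := by
    intro z hp
    induction hp with
    | refl => rfl
    | tail _ hbc ih => exact step _ ih _ hbc
  obtain ⟨e, heE, hpath⟩ := hreach k₀
  have := prop e hpath
  rw [hyE e heE] at this
  simp at this
  exact absurd this.symm hM0

lemma det_ne {N : ℕ} (P : Matrix (Fin N) (Fin N) ℝ) (hP : ∀ i j, 0 ≤ P i j)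
    (hrow : ∀ i, ∑ m, P i m = 1) (E : Finset (Fin N))
    (hreach : ∀ i : Fin N, ∃ e ∈ E, Relation.ReflTransGen (fun x y => 0 < P x y) i e) :
    (1 - subQ P E).det ≠ 0 := by
  intro hdet
  obtain ⟨v, hv, hv0⟩ := Matrix.exists_mulVec_eq_zero_iff.mpr hdet
  set y : Fin N → ℝ := fun k => if h : k ∈ E then 0 else v ⟨k, h⟩ with hy
  have hyE : ∀ k ∈ E, y k = 0 := fun k hk => dif_pos hk
  have hyF : ∀ k ∉ E, y k = ∑ m, P k m * y m := by
    intro k hk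
    have h1 : ((1 - subQ P E).mulVec v) ⟨k, hk⟩ = 0 := by rw [hv0]; rfl
    rw [Matrix.sub_mulVec, Matrix.one_mulVec] at h1
    have h2 : v ⟨k, hk⟩ = ∑ m : {k : Fin N // k ∉ E}, P k m.1 * v m := by
      have := sub_eq_zero.mp h1
      rw [this]
      simp [Matrix.mulVec, dotProduct, subQ]
    have h3 : ∑ m, P k m * y m = ∑ m ∈ Eᶜ, P k m * y m := by
      refine (Finset.sum_subset (Finset.subset_univ _) fun x _ hx => ?_).symm
      rw [Finset.mem_compl, not_not] at hx
      rw [hyE x hx, mul_zero]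
    have h4 : ∑ m ∈ Eᶜ, P k m * y m = ∑ m : {k : Fin N // k ∉ E}, P k m.1 * y m.1 :=
      Finset.sum_subtype _ (fun x => Finset.mem_compl) _
    rw [show y k = v ⟨k, hk⟩ from dif_neg hk, h2, h3, h4]
    refine Finset.sum_congr rfl fun m _ => ?_
    rw [show y m.1 = v m from dif_neg m.2]
  have := maxzero P hP E hreach y hyE hyF hrow
  apply hv
  funext m
  have := this m.1
  rw [show y m.1 = v m from dif_neg m.2] at this
  exact this

lemma hit_eq {N : ℕ} (P : Matrix (Fin N) (Fin N) ℝ) (E : Finset (Fin N))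
    (j : Fin N) (hj : j ∈ E) (h : Fin N → ℝ)
    (hE : ∀ k ∈ E, h k = if k = j then 1 else 0)
    (hF : ∀ k ∉ E, h k = ∑ m, P k m * h m)
    (hdet : (1 - subQ P E).det ≠ 0) :
    ∀ k, (hk : k ∉ E) → h k =
      ((1 - subQ P E)⁻¹.mulVec (fun m : {k : Fin N // k ∉ E} => P m.1 j)) ⟨k, hk⟩ := by
  set A := 1 - subQ P E with hA
  set x : {k : Fin N // k ∉ E} → ℝ := fun m => h m.1 with hx
  set b : {k : Fin N // k ∉ E} → ℝ := fun m => P m.1 j with hb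
  have hAx : A.mulVec x = b := by
    funext k
    have h1 : h k.1 = ∑ m ∈ E, P k.1 m * h m + ∑ m ∈ Eᶜ, P k.1 m * h m := by
      rw [Finset.sum_add_sum_compl]
      exact hF k.1 k.2
    have h2 : ∑ m ∈ E, P k.1 m * h m = P k.1 j := by
      rw [show ∑ m ∈ E, P k.1 m * h m = ∑ m ∈ E, if m = j then P k.1 m else 0 from
        Finset.sum_congr rfl fun m hm => by rw [hE m hm, mul_ite, mul_one, mul_zero]]
      rw [Finset.sum_ite_eq' E j (P k.1)]
      simp [hj]
    have h3 : ∑ m ∈ Eᶜ, P k.1 m * h m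
        = ∑ m : {k : Fin N // k ∉ E}, P k.1 m.1 * h m.1 :=
      Finset.sum_subtype _ (fun x => Finset.mem_compl) _
    have h4 : (A.mulVec x) k
        = h k.1 - ∑ m : {k : Fin N // k ∉ E}, P k.1 m.1 * h m.1 := by
      rw [hA, Matrix.sub_mulVec, Matrix.one_mulVec]
      simp [Matrix.mulVec, dotProduct, subQ, hx]
    rw [h4, h1, h2, h3, add_sub_cancel_right]
  have hinv : A⁻¹.mulVec (A.mulVec x) = x := by
    rw [Matrix.mulVec_mulVec, Matrix.nonsing_inv_mul A (isUnit_iff_ne_zero.mpr hdet),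
      Matrix.one_mulVec]
  intro k hk
  have : x ⟨k, hk⟩ = (A⁻¹.mulVec b) ⟨k, hk⟩ := by rw [← hAx, hinv]
  exact this

theorem stmt9 (N : ℕ) (Pe : ℝ → Matrix (Fin N) (Fin N) ℝ)
    (P : Matrix (Fin N) (Fin N) ℝ)
    (hstochE : ∀ ε > (0:ℝ), (∀ i j, 0 ≤ Pe ε i j) ∧ ∀ i, ∑ j, Pe ε i j = 1)
    (hstoch : (∀ i j, 0 ≤ P i j) ∧ ∀ i, ∑ j, P i j = 1)
    (hconv : ∀ i j : Fin N, i ≠ j →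
      Tendsto (fun ε => Pe ε i j) (𝓝[>] (0:ℝ)) (𝓝 (P i j)))
    (E : Finset (Fin N)) (hE : E.Nonempty)
    (hreach : ∀ i : Fin N, ∃ e ∈ E, Relation.ReflTransGen (fun x y => 0 < P x y) i e)
    (j : Fin N) (hj : j ∈ E)
    (h : ℝ → Fin N → ℝ) (h₀ : Fin N → ℝ)
    (hhE : ∀ ε > (0:ℝ), HittingDistribution (Pe ε) E j (h ε))
    (hh₀ : HittingDistribution P E j h₀) :
    ∀ i, Tendsto (fun ε => h ε i) (𝓝[>] (0:ℝ)) (𝓝 (h₀ i)) := by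
  have hmem : ∀ᶠ ε in 𝓝[>] (0:ℝ), (0:ℝ) < ε := eventually_mem_nhdsWithin
  -- entrywise convergence including the diagonal
  have hPc : ∀ a b : Fin N, Tendsto (fun ε => Pe ε a b) (𝓝[>] (0:ℝ)) (𝓝 (P a b)) := by
    intro a b
    by_cases hab : a = b
    · subst hab
      have heq : (fun ε => Pe ε a a) =ᶠ[𝓝[>] (0:ℝ)]
          (fun ε => 1 - ∑ m ∈ Finset.univ.erase a, Pe ε a m) := by
        filter_upwards [hmem] with ε hε
        have hr := (hstochE ε hε).2 a
        have := Finset.add_sum_erase Finset.univ (Pe ε a) (mem_univ a)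
        rw [hr] at this
        linarith
      have hval : P a a = 1 - ∑ m ∈ Finset.univ.erase a, P a m := by
        have hr := hstoch.2 a
        have := Finset.add_sum_erase Finset.univ (P a) (mem_univ a)
        rw [hr] at this
        linarith
      rw [hval]
      refine Tendsto.congr' heq.symm ?_
      exact tendsto_const_nhds.sub (tendsto_finset_sum _ fun m hm =>
        hconv a m (Ne.symm (Finset.ne_of_mem_erase hm)))
    · exact hconv a b hab
  have hdet0 : (1 - subQ P E).det ≠ 0 := det_ne P hstoch.1 hstoch.2 E hreach
  -- convergence of the matrices A ε = 1 - Q ε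
  have hAc : Tendsto (fun ε => 1 - subQ (Pe ε) E) (𝓝[>] (0:ℝ)) (𝓝 (1 - subQ P E)) := by
    refine tendsto_pi_nhds.mpr ?_
    intro k
    rw [tendsto_pi_nhds]
    intro m
    have : ∀ (Q : Matrix (Fin N) (Fin N) ℝ), (1 - subQ Q E) k m
        = (1 : Matrix _ _ ℝ) k m - Q k.1 m.1 := fun Q => by
      simp [Matrix.sub_apply, subQ]
    simp only [this]
    exact tendsto_const_nhds.sub (hPc k.1 m.1)
  have hdetc : Tendsto (fun ε => (1 - subQ (Pe ε) E).det) (𝓝[>] (0:ℝ))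
      (𝓝 ((1 - subQ P E).det)) :=
    ((Continuous.matrix_det continuous_id).continuousAt).tendsto.comp hAc
  have hadjc : Tendsto (fun ε => (1 - subQ (Pe ε) E).adjugate) (𝓝[>] (0:ℝ))
      (𝓝 ((1 - subQ P E).adjugate)) :=
    ((Continuous.matrix_adjugate continuous_id).continuousAt).tendsto.comp hAc
  have hinvdet : Tendsto (fun ε => ((1 - subQ (Pe ε) E).det)⁻¹) (𝓝[>] (0:ℝ))
      (𝓝 (((1 - subQ P E).det)⁻¹)) := hdetc.inv₀ hdet0
  have hev : ∀ᶠ ε in 𝓝[>] (0:ℝ), (1 - subQ (Pe ε) E).det ≠ 0 :=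
    hdetc.eventually_ne hdet0
  intro i
  by_cases hiE : i ∈ E
  · have heq : (fun ε => h ε i) =ᶠ[𝓝[>] (0:ℝ)]
        (fun _ => if i = j then (1:ℝ) else 0) := by
      filter_upwards [hmem] with ε hε
      exact (hhE ε hε).2.1 i hiE
    rw [hh₀.2.1 i hiE]
    exact Tendsto.congr' heq.symm tendsto_const_nhds
  · -- value of the limit
    have hval : h₀ i = ∑ m : {k : Fin N // k ∉ E},
        (((1 - subQ P E).det)⁻¹ * (1 - subQ P E).adjugate ⟨i, hiE⟩ m) * P m.1 j := by
      rw [hit_eq P E j hj h₀ hh₀.2.1 hh₀.2.2.1 hdet0 i hiE]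
      simp [Matrix.mulVec, dotProduct, Matrix.inv_def, Ring.inverse_eq_inv,
        Matrix.smul_apply, smul_eq_mul]
    have hadj_entry : ∀ m, Tendsto (fun ε => (1 - subQ (Pe ε) E).adjugate ⟨i, hiE⟩ m)
        (𝓝[>] (0:ℝ)) (𝓝 ((1 - subQ P E).adjugate ⟨i, hiE⟩ m)) := by
      intro m
      have h1 := tendsto_pi_nhds.mp hadjc ⟨i, hiE⟩
      exact tendsto_pi_nhds.mp h1 m
    have main : Tendsto (fun ε => ∑ m : {k : Fin N // k ∉ E},
        (((1 - subQ (Pe ε) E).det)⁻¹ * (1 - subQ (Pe ε) E).adjugate ⟨i, hiE⟩ m)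
          * Pe ε m.1 j) (𝓝[>] (0:ℝ)) (𝓝 (h₀ i)) := by
      rw [hval]
      exact tendsto_finset_sum _ fun m _ =>
        ((hinvdet.mul (hadj_entry m)).mul (hPc m.1 j))
    refine Tendsto.congr' ?_ main
    filter_upwards [hmem, hev] with ε hε hd
    rw [hit_eq (Pe ε) E j hj (h ε) (hhE ε hε).2.1 (hhE ε hε).2.2.1 hd i hiE]
    simp [Matrix.mulVec, dotProduct, Matrix.inv_def, Ring.inverse_eq_inv,
      Matrix.smul_apply, smul_eq_mul]
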